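/- There exist universal constants C₀ ≥ 0 and C₁ > 0 such that: for any 0 < x₁ and x₂ with 8x₁ ≤ x₂ ≤ 1, and any measurable ω : (0,1] → [0,1] with ω(y) = 1 for y ∈ [x₁, x₂], one has ∫_0^1 [K(x₁/y) − K(x₂/y)] (ω(y)/y) dy ≥ C₁ (log(x₂/x₁) − C₀), where K(s) = (1/s) log|(s+1)/(s−1)|. -/

import Mathlib

open MeasureTheory Set intervalIntegral

/-- The kernel of the odd-symmetrized logarithmic Biot–Savart law. -/
noncomputable def eulerK (s : ℝ) : ℝ := (1 / s) * Real.log |(s + 1) / (s - 1)|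

namespace KKE

lemma log_ratio_ge {t : ℝ} (h0 : 0 ≤ t) (h1 : t < 1) :
    2 * t ≤ Real.log ((1 + t) / (1 - t)) := by
  have h1t : (0:ℝ) < 1 + t := by linarith
  have h2t : (0:ℝ) < 1 - t := by linarith
  rw [Real.log_div h1t.ne' h2t.ne']
  set f : ℝ → ℝ := fun s => Real.log (1 + s) - Real.log (1 - s) - 2 * s with hf
  have key : MonotoneOn f (Icc 0 t) := by
    have hderiv : ∀ s : ℝ, 0 < s → s < 1 →
        HasDerivAt f (1 / (1 + s) + 1 / (1 - s) - 2) s := by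
      intro s hs0 hs1
      have d1 : HasDerivAt (fun s : ℝ => Real.log (1 + s)) (1 / (1 + s)) s := by
        have h := (Real.hasDerivAt_log (by linarith : (1:ℝ) + s ≠ 0)).comp s
          ((hasDerivAt_id s).const_add 1)
        simpa [one_div, Function.comp_def] using h
      have d2 : HasDerivAt (fun s : ℝ => Real.log (1 - s)) (-(1 / (1 - s))) s := by
        have h := (Real.hasDerivAt_log (by linarith : (1:ℝ) - s ≠ 0)).comp s
          ((hasDerivAt_id s).neg.const_add 1)
        simpa [one_div, sub_eq_add_neg, Function.comp_def] using h
      have d3 : HasDerivAt (fun s : ℝ => 2 * s) 2 s := by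
        simpa using (hasDerivAt_id s).const_mul 2
      have := (d1.sub d2).sub d3
      rw [show (1 / (1 + s) + 1 / (1 - s) - 2) = 1 / (1 + s) - -(1 / (1 - s)) - 2 by ring]
      exact this
    have c1 : ContinuousOn (fun s : ℝ => Real.log (1 + s)) (Icc 0 t) := by
      apply Real.continuousOn_log.comp (by fun_prop)
      intro s hs
      simp only [mem_Icc] at hs
      simp only [mem_compl_iff, mem_singleton_iff]
      intro h; nlinarith [hs.1]
    have c2 : ContinuousOn (fun s : ℝ => Real.log (1 - s)) (Icc 0 t) := by
      apply Real.continuousOn_log.comp (by fun_prop)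
      intro s hs
      simp only [mem_Icc] at hs
      simp only [mem_compl_iff, mem_singleton_iff]
      intro h; nlinarith [hs.2]
    apply monotoneOn_of_deriv_nonneg (convex_Icc 0 t)
    · exact (c1.sub c2).sub (by fun_prop)
    · intro s hs
      rw [interior_Icc] at hs
      exact ((hderiv s hs.1 (lt_of_lt_of_le hs.2 h1.le)).differentiableAt).differentiableWithinAt
    · intro s hs
      rw [interior_Icc] at hs
      obtain ⟨hsl, hsr⟩ := hs
      have hs1 : s < 1 := lt_of_lt_of_le hsr h1.le
      rw [(hderiv s hsl hs1).deriv]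
      have e1 : (0:ℝ) < 1 + s := by linarith
      have e2 : (0:ℝ) < 1 - s := by linarith
      rw [sub_nonneg, div_add_div _ _ e1.ne' e2.ne', le_div_iff₀ (mul_pos e1 e2)]
      nlinarith
  rcases eq_or_lt_of_le h0 with rfl | h0'
  · simp
  · have := key (left_mem_Icc.2 h0) (right_mem_Icc.2 h0) h0
    simp only [hf] at this
    simp only [add_zero, sub_zero, Real.log_one, mul_zero] at this
    linarith


noncomputable def F (x y : ℝ) : ℝ := (1 / x) * Real.log |(y + x) / (y - x)|

lemma F_self (x : ℝ) : F x x = 0 := by simp [F]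

lemma F_zero {x : ℝ} (hx : x ≠ 0) : F x 0 = 0 := by
  have h : (0 + x) / (0 - x) = -1 := by field_simp; ring
  rw [F, h]
  norm_num

lemma F_nonneg {x y : ℝ} (hx : 0 < x) (hy : 0 ≤ y) : 0 ≤ F x y := by
  rcases eq_or_ne y x with rfl | h
  · simp [F_self]
  · apply mul_nonneg (by positivity)
    apply Real.log_nonneg
    rw [abs_div, le_div_iff₀ (abs_pos.2 (sub_ne_zero.2 h)), one_mul,
        abs_of_nonneg (by linarith : (0:ℝ) ≤ y + x), abs_le]
    constructor <;> linarith

lemma F_ge {x y : ℝ} (hx : 0 < x) (hxy : x < y) : 2 / y ≤ F x y := by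
  have hy : 0 < y := hx.trans hxy
  have ht0 : 0 ≤ x / y := by positivity
  have ht1 : x / y < 1 := (div_lt_one hy).2 hxy
  have key := log_ratio_ge ht0 ht1
  have e : (1 + x / y) / (1 - x / y) = (y + x) / (y - x) := by
    rw [show 1 + x / y = (y + x) / y by field_simp,
        show 1 - x / y = (y - x) / y by field_simp,
        div_div_div_cancel_right₀ hy.ne']
  rw [e] at key
  have habs : |(y + x) / (y - x)| = (y + x) / (y - x) :=
    abs_of_pos (div_pos (by linarith) (by linarith))
  have h2 : (1 / x) * (2 * (x / y)) ≤ (1 / x) * Real.log ((y + x) / (y - x)) :=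
    mul_le_mul_of_nonneg_left key (by positivity)
  calc 2 / y = (1 / x) * (2 * (x / y)) := by field_simp
    _ ≤ (1 / x) * Real.log ((y + x) / (y - x)) := h2
    _ = F x y := by rw [F, habs]

lemma F_mono {x₁ x₂ y : ℝ} (hy : 0 < y) (h1 : y < x₁) (h12 : x₁ ≤ x₂) :
    F x₂ y ≤ F x₁ y := by
  have hx₁ : 0 < x₁ := hy.trans h1
  have hx₂ : 0 < x₂ := lt_of_lt_of_le hx₁ h12
  have habs : ∀ x : ℝ, y < x → |(y + x) / (y - x)| = (y + x) / (x - y) := by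
    intro x hxy
    rw [abs_div, abs_of_pos (by linarith : (0:ℝ) < y + x),
        abs_of_neg (by linarith : y - x < 0), neg_sub]
  rw [F, F, habs x₁ h1, habs x₂ (lt_of_lt_of_le h1 h12)]
  have hr2pos : (0:ℝ) < (y + x₂) / (x₂ - y) := div_pos (by linarith) (by linarith)
  have hL2nonneg : 0 ≤ Real.log ((y + x₂) / (x₂ - y)) := by
    apply Real.log_nonneg
    rw [le_div_iff₀ (by linarith : (0:ℝ) < x₂ - y)]
    linarith
  have hLle : Real.log ((y + x₂) / (x₂ - y)) ≤ Real.log ((y + x₁) / (x₁ - y)) := by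
    apply Real.log_le_log hr2pos
    rw [div_le_div_iff₀ (by linarith) (by linarith)]
    nlinarith
  apply mul_le_mul _ hLle hL2nonneg (by positivity)
  apply one_div_le_one_div_of_le hx₁ h12

lemma F_eq {x : ℝ} (y : ℝ) (hx : 0 < x) (hy : 0 ≤ y) : eulerK (x / y) / y = F x y := by
  rcases eq_or_lt_of_le hy with rfl | hy'
  · rw [F_zero hx.ne', div_zero]
  · rw [eulerK, F]
    rw [show x / y + 1 = (x + y) / y by field_simp,
        show x / y - 1 = (x - y) / y by field_simp,
        div_div_div_cancel_right₀ hy'.ne', one_div_div,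
        show |(x + y) / (x - y)| = |(y + x) / (y - x)| by
          rw [abs_div, abs_div, abs_sub_comm, add_comm]]
    field_simp


lemma ae_ne (x : ℝ) : ∀ᵐ (y : ℝ) ∂volume, y ≠ x := by
  have h1 : {y : ℝ | ¬ y ≠ x} = {x} := by ext z; simp
  rw [ae_iff, h1]
  exact measure_singleton x

lemma logIntble0 {c : ℝ} (hc : 0 ≤ c) : IntervalIntegrable Real.log volume 0 c := by
  rw [intervalIntegrable_iff, uIoc_of_le hc]
  have hg : IntegrableOn (fun u : ℝ => 2 * u ^ (-(1/2) : ℝ) + u) (Ioc 0 c) volume := by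
    have h1 : IntervalIntegrable (fun u : ℝ => u ^ (-(1/2) : ℝ)) volume 0 c :=
      intervalIntegrable_rpow' (by norm_num)
    have h2 := (h1.const_mul 2).add intervalIntegrable_id
    rw [intervalIntegrable_iff, uIoc_of_le hc] at h2
    exact h2
  apply Integrable.mono' hg Real.measurable_log.aestronglyMeasurable
  rw [ae_restrict_iff' measurableSet_Ioc]
  filter_upwards with u hu
  obtain ⟨hu0, huc⟩ := hu
  have hrpos : (0:ℝ) < u ^ (-(1/2) : ℝ) := Real.rpow_pos_of_pos hu0 _
  rcases le_or_gt u 1 with h1 | h1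
  · have hlog : Real.log u ≤ 0 := Real.log_nonpos hu0.le h1
    rw [Real.norm_eq_abs, abs_of_nonpos hlog]
    have hr : Real.log (u ^ (-(1/2):ℝ)) = (-(1/2)) * Real.log u := Real.log_rpow hu0 _
    have hle : Real.log (u ^ (-(1/2):ℝ)) ≤ u ^ (-(1/2):ℝ) - 1 :=
      Real.log_le_sub_one_of_pos hrpos
    rw [hr] at hle
    linarith
  · have hlog : 0 ≤ Real.log u := Real.log_nonneg h1.le
    rw [Real.norm_eq_abs, abs_of_nonneg hlog]
    have h2 := Real.log_le_sub_one_of_pos hu0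
    linarith

lemma logIntble (a b : ℝ) : IntervalIntegrable Real.log volume a b := by
  suffices h : ∀ c : ℝ, IntervalIntegrable Real.log volume 0 c by
    exact (h a).symm.trans (h b)
  intro c
  rcases le_or_gt 0 c with hc | hc
  · exact logIntble0 hc
  · have h₁ : IntervalIntegrable Real.log volume 0 (-c) := logIntble0 (by linarith)
    have h₂ := (IntervalIntegrable.iff_comp_neg (by simp)).mp h₁
    simp only [Real.log_neg_eq_log, neg_zero, neg_neg] at h₂
    exact h₂

lemma logInt {c : ℝ} (hc : 0 ≤ c) :
    ∫ u in (0:ℝ)..c, Real.log u = c * Real.log c - c := by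
  rcases eq_or_lt_of_le hc with rfl | hc'
  · simp
  · have h : ∫ u in (0:ℝ)..c, Real.log u =
        (c * Real.log c - c) - (0 * Real.log 0 - 0) := by
      apply intervalIntegral.integral_eq_sub_of_hasDeriv_right_of_le hc
        ((Real.continuous_mul_log.sub continuous_id).continuousOn)
        (fun u hu => ?_) (logIntble 0 c)
      have hne : u ≠ 0 := (hu.1).ne'
      have hd := (Real.hasDerivAt_mul_log hne).sub (hasDerivAt_id u)
      have : Real.log u + 1 - 1 = Real.log u := by ring
      rw [this] at hd
      exact hd.hasDerivWithinAt
    simpa using h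

lemma logInt' {a b : ℝ} (ha : 0 ≤ a) (hb : 0 ≤ b) :
    ∫ u in a..b, Real.log u = (b * Real.log b - b) - (a * Real.log a - a) := by
  have h := integral_add_adjacent_intervals (logIntble a 0) (logIntble 0 b)
  rw [integral_symm] at h
  rw [logInt ha, logInt hb] at h
  linarith

lemma Fcongr {x : ℝ} (hx : 0 < x) :
    (fun y : ℝ => (1/x) * (Real.log (y + x) - Real.log (y - x))) =ᵐ[volume] F x := by
  filter_upwards [ae_ne x, ae_ne (-x)] with y hy1 hy2
  rw [F, Real.log_abs, Real.log_div (fun h => hy2 (by linarith)) (sub_ne_zero.2 hy1)]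

lemma shiftIntble1 {x : ℝ} (a b : ℝ) :
    IntervalIntegrable (fun y : ℝ => Real.log (y + x)) volume a b := by
  simpa using (logIntble (a + x) (b + x)).comp_add_right x

lemma shiftIntble2 {x : ℝ} (a b : ℝ) :
    IntervalIntegrable (fun y : ℝ => Real.log (y - x)) volume a b := by
  simpa using (logIntble (a - x) (b - x)).comp_sub_right x

lemma HIntble {x : ℝ} (hx : 0 < x) (a b : ℝ) :
    IntervalIntegrable (fun y : ℝ => (1/x) * (Real.log (y + x) - Real.log (y - x)))
      volume a b :=
  ((shiftIntble1 a b).sub (shiftIntble2 a b)).const_mul (1/x)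

lemma F_intble {x : ℝ} (hx : 0 < x) (a b : ℝ) :
    IntervalIntegrable (F x) volume a b := by
  have h := HIntble hx a b
  exact ⟨h.1.congr (ae_restrict_of_ae (Fcongr hx)),
         h.2.congr (ae_restrict_of_ae (Fcongr hx))⟩

lemma FInt {x : ℝ} (hx : 0 < x) (hx1 : x ≤ 1) :
    ∫ y in (0:ℝ)..1, F x y =
      (1/x) * ((1+x) * Real.log (1+x) - 2*(x * Real.log x) - (1-x) * Real.log (1-x)) := by
  have hcongr : ∫ y in (0:ℝ)..1, F x y =
      ∫ y in (0:ℝ)..1, (1/x) * (Real.log (y + x) - Real.log (y - x)) := by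
    apply intervalIntegral.integral_congr_ae
    filter_upwards [Fcongr hx] with y hy _
    rw [hy]
  rw [hcongr, intervalIntegral.integral_const_mul,
      intervalIntegral.integral_sub (shiftIntble1 0 1) (shiftIntble2 0 1)]
  have e1 : ∫ y in (0:ℝ)..1, Real.log (y + x) =
      (1+x) * Real.log (1+x) - x * Real.log x - 1 := by
    rw [intervalIntegral.integral_comp_add_right (fun u => Real.log u) x,
        logInt' (by linarith) (by linarith : (0:ℝ) ≤ 1 + x)]
    simp only [zero_add]
    ring
  have e2 : ∫ y in (0:ℝ)..1, Real.log (y - x) =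
      x * Real.log x + (1-x) * Real.log (1-x) - 1 := by
    rw [intervalIntegral.integral_comp_sub_right (fun u => Real.log u) x]
    have hsplit := integral_add_adjacent_intervals (logIntble (0 - x) 0) (logIntble 0 (1 - x))
    rw [← hsplit]
    have eneg : ∫ u in (0 - x : ℝ)..0, Real.log u = x * Real.log x - x := by
      have e : ∫ u in (0 - x : ℝ)..0, Real.log u
          = ∫ u in (0 - x : ℝ)..0, Real.log (-u) := by
        simp only [Real.log_neg_eq_log]
      rw [e, intervalIntegral.integral_comp_neg (fun u => Real.log u)]
      simp only [neg_zero, zero_sub, neg_neg]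
      exact logInt hx.le
    rw [eneg, logInt (by linarith : (0:ℝ) ≤ 1 - x)]
    ring
  rw [e1, e2]
  ring

lemma Sbound {x : ℝ} (hx : 0 < x) (hx1 : x ≤ 1) :
    ∫ y in (0:ℝ)..1, F x y ≤ 3 - 2 * Real.log x := by
  rw [FInt hx hx1]
  have b1 : (1+x) * Real.log (1+x) ≤ 2*x := by
    have h := Real.log_le_sub_one_of_pos (by linarith : (0:ℝ) < 1 + x)
    have hl : (0:ℝ) ≤ Real.log (1 + x) := Real.log_nonneg (by linarith)
    nlinarith
  have b2 : -((1-x) * Real.log (1-x)) ≤ x := by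
    rcases eq_or_lt_of_le hx1 with rfl | hx1'
    · simp
    · have hu : (0:ℝ) < 1 - x := by linarith
      have h := Real.log_le_sub_one_of_pos (inv_pos.2 hu)
      rw [Real.log_inv] at h
      have hinv : (1-x) * (1-x)⁻¹ = 1 := mul_inv_cancel₀ hu.ne'
      nlinarith
  have key : (1+x) * Real.log (1+x) - 2*(x * Real.log x) - (1-x) * Real.log (1-x)
      ≤ 3*x - 2*(x * Real.log x) := by linarith
  calc (1/x) * ((1+x) * Real.log (1+x) - 2*(x * Real.log x) - (1-x) * Real.log (1-x))
      ≤ (1/x) * (3*x - 2*(x * Real.log x)) :=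
        mul_le_mul_of_nonneg_left key (by positivity)
    _ = 3 - 2 * Real.log x := by field_simp

end KKE

open KKE

/-- Key kernel estimate (Lemma 2.5) driving double-exponential gradient growth. -/
theorem key_kernel_estimate :
    ∃ C₀ C₁ : ℝ, 0 ≤ C₀ ∧ 0 < C₁ ∧
      ∀ (x₁ x₂ : ℝ) (ω : ℝ → ℝ),
        0 < x₁ → 8 * x₁ ≤ x₂ → x₂ ≤ 1 → Measurable ω →
        (∀ y ∈ Ioc (0:ℝ) 1, ω y ∈ Icc (0:ℝ) 1) →
        (∀ y ∈ Icc x₁ x₂, ω y = 1) →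
        C₁ * (Real.log (x₂ / x₁) - C₀) ≤
          ∫ y in (0:ℝ)..1, (eulerK (x₁ / y) - eulerK (x₂ / y)) * (ω y / y) := by
  refine ⟨3/2, 2, by norm_num, by norm_num, ?_⟩
  intro x₁ x₂ ω hx₁ h8 hx₂1 hω hωmem hω1
  have hx₂ : 0 < x₂ := lt_of_lt_of_le (by linarith) h8
  have hx₁2 : x₁ < x₂ := by linarith
  have hx₁1 : x₁ ≤ 1 := by linarith
  -- Step 1 : rewrite the integrand
  have step1 : (∫ y in (0:ℝ)..1, (eulerK (x₁ / y) - eulerK (x₂ / y)) * (ω y / y))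
      = ∫ y in (0:ℝ)..1, ω y * (F x₁ y - F x₂ y) := by
    apply intervalIntegral.integral_congr
    intro y hy
    rw [uIcc_of_le (by norm_num : (0:ℝ) ≤ 1)] at hy
    have e1 := F_eq y hx₁ hy.1
    have e2 := F_eq y hx₂ hy.1
    have e3 : (eulerK (x₁ / y) - eulerK (x₂ / y)) * (ω y / y)
        = ω y * (eulerK (x₁ / y) / y - eulerK (x₂ / y) / y) := by ring
    show (eulerK (x₁ / y) - eulerK (x₂ / y)) * (ω y / y) = ω y * (F x₁ y - F x₂ y)
    rw [e3, e1, e2]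
  -- integrabilities
  have hFint1 := F_intble hx₁ 0 1
  have hFint2 := F_intble hx₂ (0:ℝ) 1
  have hg'int : IntervalIntegrable (fun y => ω y * (F x₁ y - F x₂ y)) volume 0 1 := by
    rw [intervalIntegrable_iff, uIoc_of_le (by norm_num : (0:ℝ) ≤ 1)]
    apply Integrable.bdd_mul (c := 1) ((hFint1.sub hFint2).1)
      (hω.aestronglyMeasurable.restrict)
    rw [ae_restrict_iff' measurableSet_Ioc]
    filter_upwards with y hy
    have h := hωmem y hy
    rw [Real.norm_eq_abs, abs_le]
    exact ⟨by linarith [h.1], h.2⟩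
  have h2yint : IntervalIntegrable (fun y : ℝ => 2 * (1/y)) volume x₁ 1 := by
    apply ContinuousOn.intervalIntegrable
    apply ContinuousOn.mul continuousOn_const
    apply ContinuousOn.div continuousOn_const continuousOn_id
    intro y hy
    rw [uIcc_of_le hx₁1] at hy
    exact ne_of_gt (lt_of_lt_of_le hx₁ hy.1)
  have hlint' : IntervalIntegrable (fun y => 2 * (1/y) - F x₂ y) volume x₁ 1 :=
    h2yint.sub (F_intble hx₂ x₁ 1)
  have hlint : IntervalIntegrable
      ((Ioc x₁ 1).indicator (fun y => 2 * (1/y) - F x₂ y)) volume 0 1 := by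
    rw [intervalIntegrable_iff, uIoc_of_le (by norm_num : (0:ℝ) ≤ 1)]
    exact (hlint'.1.integrable_indicator measurableSet_Ioc).integrableOn
  -- Step 2 : monotone comparison
  have step2 : (∫ y in (0:ℝ)..1, (Ioc x₁ 1).indicator (fun y => 2 * (1/y) - F x₂ y) y)
      ≤ ∫ y in (0:ℝ)..1, ω y * (F x₁ y - F x₂ y) := by
    apply intervalIntegral.integral_mono_ae_restrict (by norm_num : (0:ℝ) ≤ 1) hlint hg'int
    filter_upwards [ae_restrict_of_ae (ae_ne x₁), ae_restrict_mem measurableSet_Icc]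
      with y hne hy
    obtain ⟨hy0, hy1⟩ := hy
    by_cases hmem : y ∈ Ioc x₁ 1
    · rw [indicator_of_mem hmem]
      have hyx₁ : x₁ < y := hmem.1
      have hypos : 0 < y := lt_trans hx₁ hyx₁
      have hF1 : 2 / y ≤ F x₁ y := F_ge hx₁ hyx₁
      have h2y : 2 * (1/y) = 2 / y := by ring
      rcases le_or_gt y x₂ with hc | hc
      · have hωy : ω y = 1 := hω1 y ⟨hyx₁.le, hc⟩
        rw [hωy, one_mul, h2y]
        linarith
      · have hF2 : 2 / y ≤ F x₂ y := F_ge hx₂ hc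
        have hωy := hωmem y ⟨hypos, hy1⟩
        have p1 : 0 ≤ ω y * (F x₁ y - 2/y) := mul_nonneg hωy.1 (by linarith)
        have p2 : 0 ≤ (1 - ω y) * (F x₂ y - 2/y) := mul_nonneg (by linarith [hωy.2]) (by linarith)
        nlinarith [p1, p2]
    · rw [indicator_of_notMem hmem]
      have hyle : y ≤ x₁ := by
        rcases lt_or_ge x₁ y with h | h
        · exact absurd ⟨h, hy1⟩ hmem
        · exact h
      have hylt : y < x₁ := lt_of_le_of_ne hyle hne
      rcases eq_or_lt_of_le hy0 with rfl | hy0'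
      · rw [F_zero hx₁.ne', F_zero hx₂.ne']
        simp
      · have hmono := F_mono hy0' hylt hx₁2.le
        have hωy := hωmem y ⟨hy0', hy1⟩
        exact mul_nonneg hωy.1 (by linarith)
  -- Step 3 : evaluate the indicator integral
  have step3 : (∫ y in (0:ℝ)..1, (Ioc x₁ 1).indicator (fun y => 2 * (1/y) - F x₂ y) y)
      = ∫ y in x₁..1, (2 * (1/y) - F x₂ y) := by
    rw [integral_of_le (by norm_num : (0:ℝ) ≤ 1),
        setIntegral_indicator measurableSet_Ioc, Ioc_inter_Ioc,
        sup_of_le_right hx₁.le, inf_idem, ← integral_of_le hx₁1]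
  -- Step 4 : compute
  have hnot : (0:ℝ) ∉ uIcc x₁ 1 := by
    rw [uIcc_of_le hx₁1, mem_Icc]
    push_neg
    intro h
    exact absurd h (not_le.2 hx₁)
  have step4 : (∫ y in x₁..1, (2 * (1/y) - F x₂ y))
      = 2 * Real.log (1/x₁) - ∫ y in x₁..1, F x₂ y := by
    rw [intervalIntegral.integral_sub h2yint (F_intble hx₂ x₁ 1),
        intervalIntegral.integral_const_mul, integral_one_div hnot]
  -- Step 5 : bound the tail
  have step5 : (∫ y in x₁..1, F x₂ y) ≤ 3 - 2 * Real.log x₂ := by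
    have hsplit := integral_add_adjacent_intervals (F_intble hx₂ 0 x₁) (F_intble hx₂ x₁ 1)
    have hpos : 0 ≤ ∫ y in (0:ℝ)..x₁, F x₂ y :=
      intervalIntegral.integral_nonneg hx₁.le (fun u hu => F_nonneg hx₂ hu.1)
    have hS := Sbound hx₂ hx₂1
    linarith
  -- final assembly
  have hlog1 : Real.log (1/x₁) = - Real.log x₁ := by rw [one_div, Real.log_inv]
  have hlogdiv : Real.log (x₂/x₁) = Real.log x₂ - Real.log x₁ :=
    Real.log_div hx₂.ne' hx₁.ne'
  rw [step1, hlogdiv]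
  rw [step3, step4, hlog1] at step2
  linarith
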